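/- Under the Künneth identification, [x]⊗[x'] lies in the image of H((F⊗F')_m) → H(C⊗C') if and only if there exist m1, m2 with m1 + m2 = m, [x] ∈ Im(H(F_{m1}) → H(C)) and [x'] ∈ Im(H(F'_{m2}) → H(C')). -/

import Mathlib

open TensorProduct

/-- Under the Künneth identification, the class `[x] ⊗ [x']` (represented by
the cycle `x ⊗ x'`) lies in the image of `H((F⊗F')_m) → H(C ⊗ C')` if and
only if there exist `m₁ + m₂ = m` with `[x] ∈ Im (H(F_{m₁}) → H(C))` and
`[x'] ∈ Im (H(F'_{m₂}) → H(C'))`. -/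
theorem tensor_filtration_image_iff
    (V V' : Type) [AddCommGroup V] [Module (ZMod 2) V] [FiniteDimensional (ZMod 2) V]
    [AddCommGroup V'] [Module (ZMod 2) V'] [FiniteDimensional (ZMod 2) V']
    (d : V →ₗ[ZMod 2] V) (hd : ∀ v, d (d v) = 0)
    (d' : V' →ₗ[ZMod 2] V') (hd' : ∀ v, d' (d' v) = 0)
    (F : ℤ → Submodule (ZMod 2) V) (F' : ℤ → Submodule (ZMod 2) V')
    (hmono : ∀ ⦃m m' : ℤ⦄, m ≤ m' → F m ≤ F m')
    (hmono' : ∀ ⦃m m' : ℤ⦄, m ≤ m' → F' m ≤ F' m')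
    (hinv : ∀ m, F m ≤ (F m).comap d)
    (hinv' : ∀ m, F' m ≤ (F' m).comap d')
    (j : ℤ) (hbot : ∀ m ≤ -j, F m = ⊥) (hbot' : ∀ m ≤ -j, F' m = ⊥)
    (n : ℤ) (htop : ∀ m ≥ n, F m = ⊤) (htop' : ∀ m ≥ n, F' m = ⊤)
    (x : V) (hx : d x = 0) (hx0 : x ∉ LinearMap.range d)
    (x' : V') (hx' : d' x' = 0) (hx0' : x' ∉ LinearMap.range d')
    (m : ℤ) :
    let dT : V ⊗[ZMod 2] V' →ₗ[ZMod 2] V ⊗[ZMod 2] V' :=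
      TensorProduct.map d LinearMap.id + TensorProduct.map LinearMap.id d'
    let FT : ℤ → Submodule (ZMod 2) (V ⊗[ZMod 2] V') := fun m =>
      ⨆ (p : ℤ × ℤ) (_ : p.1 + p.2 = m),
        LinearMap.range (TensorProduct.map (F p.1).subtype (F' p.2).subtype)
    ((∃ w ∈ FT m, dT w = 0 ∧ x ⊗ₜ[ZMod 2] x' - w ∈ LinearMap.range dT) ↔
      (∃ m₁ m₂ : ℤ, m₁ + m₂ = m ∧
        (∃ y ∈ F m₁, d y = 0 ∧ x - y ∈ LinearMap.range d) ∧
        (∃ y' ∈ F' m₂, d' y' = 0 ∧ x' - y' ∈ LinearMap.range d'))) := by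
  intro dT FT
  constructor
  · -- hard direction
    rintro ⟨w, hwFT, hwcyc, s, hs⟩
    -- the minimal filtration level containing a cycle representative of [x]
    obtain ⟨m₁s, ⟨y, hyF, hyc, hyb⟩, hleast⟩ :=
      Int.exists_least_of_bdd (P := fun k => ∃ y ∈ F k, d y = 0 ∧ x - y ∈ LinearMap.range d)
        (⟨-j + 1, by
          intro z hz
          by_contra h
          push_neg at h
          obtain ⟨y, hyF, _, hyb⟩ := hz
          rw [hbot z (by omega)] at hyF
          simp only [Submodule.mem_bot] at hyF
          subst hyF
          rw [sub_zero] at hyb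
          exact hx0 hyb⟩)
        ⟨n, x, by rw [htop n le_rfl]; trivial, hx, by rw [sub_self]; exact zero_mem _⟩
    -- x is not in Im d + F (m₁s - 1)
    have hxW : x ∉ LinearMap.range d ⊔ F (m₁s - 1) := by
      intro hmem
      rw [Submodule.mem_sup] at hmem
      obtain ⟨u, ⟨z, rfl⟩, f, hf, hsum⟩ := hmem
      have : m₁s ≤ m₁s - 1 := by
        refine hleast _ ⟨f, hf, ?_, ?_⟩
        · have : f = x - d z := by rw [← hsum]; abel
          rw [this]
          simp [hx, hd z]
        · have : x - f = d z := by rw [← hsum]; abel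
          rw [this]; exact ⟨z, rfl⟩
      omega
    -- a functional killing Im d + F (m₁s - 1) with φ x = 1
    set W : Submodule (ZMod 2) V := LinearMap.range d ⊔ F (m₁s - 1) with hW
    have hxQ : Submodule.Quotient.mk (p := W) x ≠ 0 := by
      rw [Ne, Submodule.Quotient.mk_eq_zero]
      exact hxW
    obtain ⟨g0, hg0⟩ :=
      (LinearMap.toSpanSingleton (ZMod 2) (V ⧸ W)
        (Submodule.Quotient.mk x)).exists_leftInverse_of_injective
        (LinearMap.ker_toSpanSingleton (ZMod 2) hxQ)
    set φ : V →ₗ[ZMod 2] ZMod 2 := g0 ∘ₗ W.mkQ with hφdef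
    have hφx : φ x = 1 := by
      have := LinearMap.congr_fun hg0 1
      simpa [φ, LinearMap.toSpanSingleton, Submodule.mkQ_apply] using this
    have hφW : ∀ v ∈ W, φ v = 0 := by
      intro v hv
      have : W.mkQ v = 0 := by rwa [Submodule.mkQ_apply, Submodule.Quotient.mk_eq_zero]
      simp [φ, this]
    have hφd : ∀ v, φ (d v) = 0 := fun v =>
      hφW _ (Submodule.mem_sup_left ⟨v, rfl⟩)
    -- minimal level where φ does not vanish
    obtain ⟨k₀, ⟨a₀, ha₀F, ha₀φ⟩, hk₀least⟩ :=
      Int.exists_least_of_bdd (P := fun k => ∃ a ∈ F k, φ a ≠ 0)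
        (⟨-j + 1, by
          intro z hz
          by_contra h
          push_neg at h
          obtain ⟨a, haF, haφ⟩ := hz
          rw [hbot z (by omega)] at haF
          simp only [Submodule.mem_bot] at haF
          subst haF
          simp at haφ⟩)
        ⟨n, x, by rw [htop n le_rfl]; trivial, by rw [hφx]; exact one_ne_zero⟩
    have hm₁k₀ : m₁s ≤ k₀ := by
      by_contra h
      push_neg at h
      exact ha₀φ (hφW _ (Submodule.mem_sup_right (hmono (by omega) ha₀F)))
    -- the contraction map g(a ⊗ b) = φ a • b
    set g : V ⊗[ZMod 2] V' →ₗ[ZMod 2] V' :=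
      (TensorProduct.lid (ZMod 2) V').toLinearMap ∘ₗ TensorProduct.map φ LinearMap.id with hgdef
    have hg_tmul : ∀ (a : V) (b : V'), g (a ⊗ₜ b) = φ a • b := by
      intro a b; simp [g]
    have hgchain : g ∘ₗ dT = d' ∘ₗ g := by
      apply TensorProduct.ext'
      intro a b
      simp only [LinearMap.comp_apply, dT, LinearMap.add_apply, TensorProduct.map_tmul,
        LinearMap.id_apply, map_add, hg_tmul, hφd a, zero_smul, zero_add, map_smul]
    -- g maps FT m into F' (m - k₀)
    have hgFT : FT m ≤ (F' (m - k₀)).comap g := by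
      apply iSup_le
      intro p
      apply iSup_le
      intro hp
      rw [TensorProduct.range_map_eq_span_tmul, Submodule.span_le]
      rintro t ⟨a, b, rfl⟩
      simp only [Submodule.coe_subtype, SetLike.mem_coe, Submodule.mem_comap, hg_tmul]
      rcases le_or_gt k₀ p.1 with hk | hk
      · exact Submodule.smul_mem _ _ (hmono' (by omega) b.2)
      · have : φ (a : V) = 0 := by
          by_contra hne
          have := hk₀least p.1 ⟨a, a.2, hne⟩
          omega
        rw [this, zero_smul]
        exact zero_mem _
    refine ⟨k₀, m - k₀, by omega, ⟨y, hmono hm₁k₀ hyF, hyc, hyb⟩, g w, hgFT hwFT, ?_, ?_⟩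
    · have := LinearMap.congr_fun hgchain w
      simp only [LinearMap.comp_apply, hwcyc, map_zero] at this
      exact this.symm
    · have hgx : g (x ⊗ₜ[ZMod 2] x') = x' := by rw [hg_tmul, hφx, one_smul]
      have := LinearMap.congr_fun hgchain s
      simp only [LinearMap.comp_apply, hs] at this
      refine ⟨g s, ?_⟩
      rw [← this, map_sub, hgx]
  · -- easy direction
    rintro ⟨m₁, m₂, hm, ⟨y, hyF, hyc, z, hz⟩, ⟨y', hyF', hyc', z', hz'⟩⟩
    refine ⟨y ⊗ₜ y', ?_, ?_, ?_⟩
    · apply Submodule.mem_iSup_of_mem (⟨m₁, m₂⟩ : ℤ × ℤ)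
      apply Submodule.mem_iSup_of_mem hm
      exact ⟨(⟨y, hyF⟩ : F m₁) ⊗ₜ (⟨y', hyF'⟩ : F' m₂), rfl⟩
    · simp [dT, hyc, hyc']
    · refine ⟨z ⊗ₜ x' + y ⊗ₜ z', ?_⟩
      simp only [dT, LinearMap.add_apply, map_add, TensorProduct.map_tmul, LinearMap.id_apply,
        hz, hz', hx', hyc, TensorProduct.tmul_zero, TensorProduct.zero_tmul, add_zero, zero_add]
      rw [TensorProduct.sub_tmul, TensorProduct.tmul_sub]
      abel
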